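/- Let p_1, ..., p_r be distinct odd primes, m = p_1 ⋯ p_r, n = 2m², D = {(m/p_1)², (m/p_2)², ..., (m/p_r)²}, and S = ⋃_{d∈D} G_n(d). Then the integral circulant graph G(n;S) has diameter exactly 2r + 1. -/

import Mathlib

/-- `Gn n d = {k : 1 ≤ k ≤ n-1, gcd(k,n) = d}`. -/
def Gn (n d : ℕ) : Finset ℕ := (Finset.Ioo 0 n).filter fun k => Nat.gcd k n = d

private lemma list_sum_parity (l : List ℕ) (h : ∀ k ∈ l, Odd k) :
    l.sum % 2 = l.length % 2 := by
  induction l with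
  | nil => rfl
  | cons a t ih =>
    have ha := Nat.odd_iff.mp (h a (by simp))
    have ht := ih (fun k hk => h k (by simp [hk]))
    simp only [List.sum_cons, List.length_cons]
    omega

private lemma sum_modEq {ι : Type*} (s : Finset ι) (f g : ι → ℕ) (N : ℕ)
    (h : ∀ i ∈ s, f i ≡ g i [MOD N]) :
    (∑ i ∈ s, f i) ≡ (∑ i ∈ s, g i) [MOD N] := by
  classical
  induction s using Finset.induction_on with
  | empty => rfl
  | @insert a s ha ih =>
    rw [Finset.sum_insert ha, Finset.sum_insert ha]
    exact (h _ (by simp)).add (ih fun i hi => h i (by simp [hi]))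

private lemma flatMap_pair_sum {ι : Type*} (l : List ι) (f g : ι → ℕ) :
    (l.flatMap fun i => [f i, g i]).sum = (l.map fun i => f i + g i).sum := by
  induction l with
  | nil => rfl
  | cons a t ih => simp [List.flatMap_cons, ih]; ring

private lemma filter_sum_modEq (N : ℕ) (P : ℕ → Prop) [DecidablePred P] (l : List ℕ)
    (h0 : ∀ k ∈ l, ¬ P k → N ∣ k) :
    l.sum ≡ (l.filter fun k => P k).sum [MOD N] := by
  induction l with
  | nil => rfl
  | cons a t ih =>
    have ht := ih (fun k hk hnk => h0 k (by simp [hk]) hnk)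
    by_cases hPa : P a
    · simpa [List.filter_cons, hPa] using ht.add_left a
    · have : a ≡ 0 [MOD N] := Nat.modEq_zero_iff_dvd.mpr (h0 a (by simp) hPa)
      simpa [List.filter_cons, hPa] using (this.add ht)

private lemma sum_filter_length_le {ι : Type*} [Fintype ι] (P : ι → ℕ → Prop)
    [∀ i k, Decidable (P i k)] (huniq : ∀ k i j, P i k → P j k → i = j) (l : List ℕ) :
    (∑ i, (l.filter fun k => P i k).length) ≤ l.length := by
  induction l with
  | nil => simp
  | cons a t ih =>
    have hsplit : ∀ i : ι, ((a :: t).filter fun k => P i k).length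
        = (t.filter fun k => P i k).length + (if P i a then 1 else 0) := by
      intro i; by_cases h : P i a <;> simp [List.filter_cons, h]
    simp only [hsplit, Finset.sum_add_distrib, List.length_cons]
    have hcard : (∑ i : ι, if P i a then 1 else 0)
        = (Finset.univ.filter fun i => P i a).card := (Finset.card_filter _ _).symm
    have h1 : (Finset.univ.filter fun i => P i a).card ≤ 1 := by
      apply Finset.card_le_one.mpr
      intro i hi j hj
      exact huniq a i j (Finset.mem_filter.mp hi).2 (Finset.mem_filter.mp hj).2
    omega

/-- For distinct odd primes `p₁, …, p_r`, `m = p₁ ⋯ p_r`,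
`n = 2m²`, `D = {(m/p₁)², …, (m/p_r)²}` and `S = ⋃_{d ∈ D} G_n(d)`, the
integral circulant graph `G(n;S)` has diameter exactly `2r + 1`. -/
theorem stmt_14 (r : ℕ) (hr : 0 < r) (p : Fin r → ℕ)
    (hprime : ∀ i, (p i).Prime) (hodd : ∀ i, Odd (p i))
    (hinj : Function.Injective p)
    (m : ℕ) (hm : m = ∏ i, p i)
    (n : ℕ) (hn : n = 2 * m ^ 2)
    (D : Finset ℕ) (hD : D = Finset.image (fun i => (m / p i) ^ 2) Finset.univ)
    (S : Finset ℕ) (hS : S = D.biUnion (Gn n))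
    (G : SimpleGraph (ZMod n))
    (hG : ∀ u v : ZMod n, G.Adj u v ↔ (u - v).val ∈ S) :
    G.diam = 2 * r + 1 := by
  classical
  -- basic facts about the primes
  have hp3 : ∀ i, 3 ≤ p i := by
    intro i
    have h2 := (hprime i).two_le
    have : p i ≠ 2 := by
      intro h; have := hodd i; rw [h] at this; exact (by decide : ¬ Odd 2) this
    omega
  have hq : ∀ i, m / p i = ∏ j ∈ Finset.univ.erase i, p j := by
    intro i
    rw [hm, ← Finset.mul_prod_erase Finset.univ p (Finset.mem_univ i)]
    exact Nat.mul_div_cancel_left _ (hprime i).pos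
  have hqp : ∀ i, p i * (m / p i) = m := by
    intro i
    rw [hq i, hm]
    exact Finset.mul_prod_erase Finset.univ p (Finset.mem_univ i)
  have hq_pos : ∀ i, 0 < m / p i := by
    intro i; rw [hq i]; exact Finset.prod_pos (fun j _ => (hprime j).pos)
  have hpdvdq : ∀ i j, i ≠ j → p i ∣ m / p j := by
    intro i j hij
    rw [hq j]
    exact Finset.dvd_prod_of_mem p (by simp [Finset.mem_erase, hij])
  have hpq : ∀ i, ¬ p i ∣ m / p i := by
    intro i h
    rw [hq i] at h
    obtain ⟨j, hj, hdvd⟩ := (hprime i).prime.exists_mem_finset_dvd h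
    have hij : p i = p j := (Nat.prime_dvd_prime_iff_eq (hprime i) (hprime j)).mp hdvd
    exact (Finset.mem_erase.mp hj).1 (hinj hij).symm
  have hmodd : Odd m := by
    rcases Nat.even_or_odd m with he | ho
    · exfalso
      obtain ⟨c, hc⟩ := he
      have h2 : (2 : ℕ) ∣ m := ⟨c, by omega⟩
      rw [hm] at h2
      obtain ⟨j, _, hdvd⟩ := (Nat.prime_two).prime.exists_mem_finset_dvd h2
      have := (Nat.prime_dvd_prime_iff_eq Nat.prime_two (hprime j)).mp hdvd
      have := hp3 j; omega
    · exact ho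
  have hm3 : 3 ≤ m := by
    have h1 := hqp ⟨0, hr⟩
    have h2 := hq_pos ⟨0, hr⟩
    have h3 := hp3 ⟨0, hr⟩
    nlinarith
  have hm2pos : 0 < m ^ 2 := by positivity
  haveI : NeZero n := ⟨by omega⟩
  set d : Fin r → ℕ := fun i => (m / p i) ^ 2 with hd_def
  have hn_i : ∀ i, n = 2 * p i ^ 2 * d i := by
    intro i
    rw [hn, hd_def]
    have := hqp i
    nlinarith [hqp i]
  have hd_odd : ∀ i, Odd (d i) := by
    intro i
    have : Odd (m / p i) := by
      rcases Nat.even_or_odd (m / p i) with he | ho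
      · exfalso
        have : Even m := by rw [← hqp i]; exact he.mul_left _
        exact (Nat.not_even_iff_odd.mpr hmodd) this
      · exact ho
    exact this.pow
  have hd_pos : ∀ i, 0 < d i := fun i => pow_pos (hq_pos i) 2
  have hd_lt : ∀ i, d i < n := by
    intro i
    have h1 : m / p i ≤ m := Nat.div_le_self _ _
    have h2 : d i ≤ m ^ 2 := Nat.pow_le_pow_left h1 2
    omega
  have hcop_pq : ∀ i, Nat.Coprime (p i) (m / p i) :=
    fun i => ((hprime i).coprime_iff_not_dvd).mpr (hpq i)
  have hd_cop_p : ∀ i, Nat.Coprime (d i) (p i) := by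
    intro i
    exact Nat.Coprime.pow_left 2 ((hcop_pq i).symm)
  have hd_inj : ∀ i j, d i = d j → i = j := by
    intro i j h
    have hq_eq : m / p i = m / p j := Nat.pow_left_injective (by norm_num) h
    have : p i * (m / p i) = p j * (m / p i) := by rw [hqp i, hq_eq, hqp j]
    have hp_eq : p i = p j := Nat.eq_of_mul_eq_mul_right (hq_pos i) this
    exact hinj hp_eq
  have hpj2_dvd : ∀ i j : Fin r, j ≠ i → p j ^ 2 ∣ d i := by
    intro i j hji
    exact pow_dvd_pow_of_dvd (hpdvdq j i hji) 2
  -- membership in S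
  have hSmem : ∀ k, k ∈ S ↔ (0 < k ∧ k < n ∧ ∃ i, Nat.gcd k n = d i) := by
    intro k
    simp only [hS, hD, Finset.mem_biUnion, Finset.mem_image, Finset.mem_univ, true_and,
      Gn, Finset.mem_filter, Finset.mem_Ioo]
    constructor
    · rintro ⟨a, ⟨i, rfl⟩, ⟨hk1, hk2⟩, hk3⟩
      exact ⟨hk1, hk2, i, hk3⟩
    · rintro ⟨hk1, hk2, i, hk3⟩
      exact ⟨d i, ⟨i, rfl⟩, ⟨hk1, hk2⟩, hk3⟩
  -- gcd characterization
  have hgcd_eq : ∀ (i : Fin r) (a : ℕ), d i ∣ a → Odd a → ¬ p i ∣ a →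
      Nat.gcd a n = d i := by
    intro i a hdvd hodda hpa
    obtain ⟨t, rfl⟩ := hdvd
    have ht_odd : Odd t := (Nat.odd_mul.mp hodda).2
    have htp : Nat.Coprime t (p i) := by
      refine Nat.Coprime.symm (((hprime i).coprime_iff_not_dvd).mpr ?_)
      intro h; exact hpa (h.mul_left _)
    have hco : Nat.Coprime t (2 * p i ^ 2) :=
      Nat.Coprime.mul_right ht_odd.coprime_two_right (htp.pow_right 2)
    rw [hn_i i, show 2 * p i ^ 2 * d i = d i * (2 * p i ^ 2) by ring,
      Nat.gcd_mul_left, hco.gcd_eq_one, mul_one]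
  have hdi_mem_S : ∀ i, d i ∈ S := by
    intro i
    rw [hSmem]
    refine ⟨hd_pos i, hd_lt i, i, hgcd_eq i _ dvd_rfl (hd_odd i) ?_⟩
    intro h
    have : p i ∣ m / p i := (Nat.Prime.dvd_of_dvd_pow (hprime i)) h
    exact hpq i this
  have hS_pos : ∀ k ∈ S, 0 < k := fun k hk => ((hSmem k).mp hk).1
  have hS_lt : ∀ k ∈ S, k < n := fun k hk => ((hSmem k).mp hk).2.1
  have hS_odd : ∀ k ∈ S, Odd k := by
    intro k hk
    obtain ⟨hk0, hkn, i, hgcd⟩ := (hSmem k).mp hk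
    rcases Nat.even_or_odd k with he | ho
    · exfalso
      have h2n : (2 : ℕ) ∣ n := ⟨m ^ 2, hn⟩
      have h2k : (2 : ℕ) ∣ k := he.two_dvd
      have h1 : (2 : ℕ) ∣ d i := hgcd ▸ Nat.dvd_gcd h2k h2n
      have h2 : d i % 2 = 1 := Nat.odd_iff.mp (hd_odd i)
      omega
    · exact ho
  have hS_not_dvd : ∀ k ∈ S, ∀ i, Nat.gcd k n = d i → ¬ p i ∣ k := by
    intro k hk i hgcd hpk
    have hpn : p i ∣ n := by rw [hn_i i]; exact ⟨2 * p i * d i, by ring⟩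
    have : p i ∣ d i := hgcd ▸ Nat.dvd_gcd hpk hpn
    exact absurd (Nat.Coprime.eq_one_of_dvd (hd_cop_p i).symm this) (hprime i).ne_one
  -- walk to list of generators
  have walk_list : ∀ (u v : ZMod n) (W : G.Walk u v), ∃ l : List ℕ,
      (∀ k ∈ l, k ∈ S) ∧ l.length = W.length ∧ v = u + ((l.sum : ℕ) : ZMod n) := by
    intro u v W
    induction W with
    | nil => exact ⟨[], by simp, by simp, by simp⟩
    | @cons a b c h W ih =>
      obtain ⟨l, hl, hlen, hsum⟩ := ih
      refine ⟨(b - a).val :: l, ?_, by simp [hlen], ?_⟩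
      · intro k hk
        rcases List.mem_cons.mp hk with hk | hk
        · rw [hk]; exact (hG b a).mp h.symm
        · exact hl k hk
      · have hcast : (((b - a).val : ℕ) : ZMod n) = b - a := ZMod.natCast_rightInverse _
        calc c = b + ((l.sum : ℕ) : ZMod n) := hsum
        _ = a + ((((b - a).val : ℕ) : ZMod n) + ((l.sum : ℕ) : ZMod n)) := by
            rw [hcast]; ring
        _ = a + ((((b - a).val :: l).sum : ℕ) : ZMod n) := by
            rw [List.sum_cons, Nat.cast_add]
  -- list of generators to walk
  have list_walk : ∀ (l : List ℕ), (∀ k ∈ l, k ∈ S) → ∀ u : ZMod n,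
      ∃ W : G.Walk u (u + ((l.sum : ℕ) : ZMod n)), W.length = l.length := by
    intro l
    induction l with
    | nil =>
      intro _ u
      exact ⟨SimpleGraph.Walk.nil.copy rfl (by simp), by rw [SimpleGraph.Walk.length_copy]; rfl⟩
    | cons a t ih =>
      intro hmem u
      have haS : a ∈ S := hmem a (by simp)
      have hadj : G.Adj u (u + (a : ZMod n)) := by
        have : G.Adj (u + (a : ZMod n)) u := by
          rw [hG]
          have : (u + (a : ZMod n) - u) = (a : ZMod n) := by ring
          rw [this, ZMod.val_cast_of_lt (hS_lt a haS)]
          exact haS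
        exact this.symm
      obtain ⟨W, hW⟩ := ih (fun k hk => hmem k (by simp [hk])) (u + (a : ZMod n))
      have hend : u + (a : ZMod n) + ((t.sum : ℕ) : ZMod n) = u + (((a :: t).sum : ℕ) : ZMod n) := by
        rw [List.sum_cons, Nat.cast_add]; ring
      refine ⟨(SimpleGraph.Walk.cons hadj W).copy rfl hend, ?_⟩
      rw [SimpleGraph.Walk.length_copy, SimpleGraph.Walk.length_cons, hW, List.length_cons]
  -- pair realization
  have pair_exists : ∀ (i : Fin r) (c : ℕ), ∃ a b : ℕ, a ∈ S ∧ b ∈ S ∧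
      (a + b) ≡ 2 * d i * c [MOD n] := by
    intro i c
    set γ : ℕ := if (2 * d i * c) % p i = 1 then p i + 2 else 1 with hγ_def
    have hγ_odd : Odd γ := by
      rw [hγ_def]
      by_cases h : (2 * d i * c) % p i = 1
      · rw [if_pos h]; exact (hodd i).add_even even_two
      · rw [if_neg h]; exact odd_one
    have hγ_mod : γ % p i ≠ 0 ∧ γ % p i ≠ (2 * d i * c) % p i := by
      have h3 := hp3 i
      have hlt : (2 * d i * c) % p i < p i := Nat.mod_lt _ (by omega)
      rw [hγ_def]
      by_cases h : (2 * d i * c) % p i = 1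
      · rw [if_pos h]
        have h2 : (p i + 2) % p i = 2 := by
          rw [Nat.add_mod_left]; exact Nat.mod_eq_of_lt (by omega)
        omega
      · rw [if_neg h]
        have h2 : 1 % p i = 1 := Nat.mod_eq_of_lt (by omega)
        omega
    have hcop : Nat.Coprime (d i) (2 * p i) :=
      Nat.Coprime.mul_right (hd_odd i).coprime_two_right (hd_cop_p i)
    obtain ⟨a₀, ha₀d, ha₀γ⟩ := Nat.chineseRemainder hcop 0 γ
    set M := d i * (2 * p i) with hM_def
    have hp_pos : 0 < p i := (hprime i).pos
    have hMpos : 0 < M := Nat.mul_pos (hd_pos i) (by omega)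
    set a := a₀ % M with ha_def
    have haM : a ≡ a₀ [MOD M] := Nat.mod_modEq a₀ M
    have ha_d : d i ∣ a :=
      Nat.modEq_zero_iff_dvd.mp ((haM.of_dvd ⟨2 * p i, rfl⟩).trans ha₀d)
    have ha_γ : a ≡ γ [MOD 2 * p i] := (haM.of_dvd ⟨d i, by ring⟩).trans ha₀γ
    have ha_odd : Odd a := by
      have h2 : a % 2 = γ % 2 := ha_γ.of_dvd ⟨p i, rfl⟩
      have h3 := Nat.odd_iff.mp hγ_odd
      rw [Nat.odd_iff]; omega
    have ha_p : a % p i = γ % p i := ha_γ.of_dvd ⟨2, by ring⟩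
    have ha_ndvd : ¬ p i ∣ a := by
      rw [Nat.dvd_iff_mod_eq_zero]
      rw [ha_p]; exact hγ_mod.1
    have ha_lt_M : a < M := Nat.mod_lt _ hMpos
    have ha_lt : a < n := by
      have hMn : M * p i = n := by rw [hM_def, hn_i i]; ring
      have h3 := hp3 i
      nlinarith
    have ha_pos : 0 < a := ha_odd.pos
    have haS : a ∈ S := (hSmem a).mpr ⟨ha_pos, ha_lt, i, hgcd_eq i a ha_d ha_odd ha_ndvd⟩
    set w := 2 * d i * c + (n - a) with hw_def
    set b := w % n with hb_def
    have hb_w : b ≡ w [MOD n] := Nat.mod_modEq w n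
    have h2dc : 2 * d i * c = 2 * (d i * c) := by ring
    have hab : a + w = 2 * d i * c + n := by omega
    have hnpos : 0 < n := by omega
    have hb_lt : b < n := Nat.mod_lt _ hnpos
    have h2n : (2 : ℕ) ∣ n := ⟨m ^ 2, hn⟩
    have hb_odd : Odd b := by
      have h1 : b % 2 = w % 2 := hb_w.of_dvd h2n
      have h2 : a % 2 = 1 := Nat.odd_iff.mp ha_odd
      have h3 : n % 2 = 0 := by omega
      rw [Nat.odd_iff]; omega
    have hd_n : d i ∣ n := ⟨2 * p i ^ 2, by rw [hn_i i]; ring⟩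
    have hb_d : d i ∣ b := by
      rw [hb_def, Nat.dvd_mod_iff hd_n]
      exact Nat.dvd_add ⟨2 * c, by ring⟩ (Nat.dvd_sub hd_n ha_d)
    have hp_n : p i ∣ n := ⟨2 * p i * d i, by rw [hn_i i]; ring⟩
    have hb_ndvd : ¬ p i ∣ b := by
      intro hpb
      have hpw : p i ∣ w := (Nat.dvd_mod_iff hp_n).mp hpb
      have e1 : a + w ≡ a + 0 [MOD p i] := Nat.ModEq.add_left a (Nat.modEq_zero_iff_dvd.mpr hpw)
      have e2 : 2 * d i * c + n ≡ 2 * d i * c + 0 [MOD p i] :=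
        Nat.ModEq.add_left _ (Nat.modEq_zero_iff_dvd.mpr hp_n)
      have e3 : a ≡ 2 * d i * c [MOD p i] := by
        have h4 := e2.symm.trans (hab ▸ e1)
        simpa using h4.symm
      have e4 : a % p i = (2 * d i * c) % p i := e3
      rw [ha_p] at e4
      exact hγ_mod.2 e4
    have hb_pos : 0 < b := hb_odd.pos
    have hbS : b ∈ S := (hSmem b).mpr ⟨hb_pos, hb_lt, i, hgcd_eq i b hb_d hb_odd hb_ndvd⟩
    refine ⟨a, b, haS, hbS, ?_⟩
    calc a + b ≡ a + w [MOD n] := Nat.ModEq.add_left a hb_w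
    _ = 2 * d i * c + n := hab
    _ ≡ 2 * d i * c [MOD n] := by
        have := Nat.ModEq.add_left (2 * d i * c) (Nat.modEq_zero_iff_dvd.mpr (dvd_refl n))
        simpa using this
  -- Bezout-type realization of even residues
  have bezout : ∀ w : ℕ, ∃ c : Fin r → ℕ, (∑ i, 2 * d i * c i) ≡ 2 * w [MOD n] := by
    intro w
    have hppos : ∀ i : Fin r, 0 < p i ^ 2 := fun i => pow_pos (hprime i).pos 2
    haveI : ∀ i : Fin r, NeZero (p i ^ 2) := fun i => ⟨(hppos i).ne'⟩
    set c : Fin r → ℕ :=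
      fun i => (((d i : ZMod (p i ^ 2)))⁻¹ * (w : ZMod (p i ^ 2))).val with hc_def
    have key : ∀ i : Fin r, (∑ j, d j * c j) ≡ w [MOD p i ^ 2] := by
      intro i
      have hu : IsUnit ((d i : ℕ) : ZMod (p i ^ 2)) :=
        (ZMod.isUnit_iff_coprime _ _).mpr ((hd_cop_p i).pow_right 2)
      rw [← ZMod.natCast_eq_natCast_iff]
      have hzero : ∀ j : Fin r, j ≠ i → ((d j : ℕ) : ZMod (p i ^ 2)) = 0 := fun j hji =>
        (ZMod.natCast_eq_zero_iff _ _).mpr (hpj2_dvd j i (Ne.symm hji))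
      have hci : ((c i : ℕ) : ZMod (p i ^ 2))
          = ((d i : ZMod (p i ^ 2)))⁻¹ * (w : ZMod (p i ^ 2)) :=
        ZMod.natCast_rightInverse _
      calc ((∑ j, d j * c j : ℕ) : ZMod (p i ^ 2))
          = ∑ j, ((d j : ℕ) : ZMod (p i ^ 2)) * ((c j : ℕ) : ZMod (p i ^ 2)) := by
            push_cast; rfl
        _ = ((d i : ℕ) : ZMod (p i ^ 2)) * ((c i : ℕ) : ZMod (p i ^ 2)) := by
            apply Finset.sum_eq_single i
            · intro j _ hji; rw [hzero j hji, zero_mul]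
            · intro h; exact absurd (Finset.mem_univ i) h
        _ = (w : ZMod (p i ^ 2)) := by
            rw [hci, ← mul_assoc, ZMod.mul_inv_of_unit _ hu, one_mul]
    have hprod : ((List.finRange r).map fun i => p i ^ 2).prod = m ^ 2 := by
      rw [← Fin.prod_univ_def, hm]
      exact Finset.prod_pow _ _ _
    have hpair : (List.finRange r).Pairwise (Function.onFun Nat.Coprime fun i => p i ^ 2) := by
      refine List.Nodup.pairwise_of_forall_ne (List.nodup_finRange r) ?_
      intro i _ j _ hij
      show Nat.Coprime (p i ^ 2) (p j ^ 2)
      exact Nat.Coprime.pow 2 2 ((Nat.coprime_primes (hprime i) (hprime j)).mpr (fun h => hij (hinj h)))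
    have hm2 : (∑ j, d j * c j) ≡ w [MOD m ^ 2] := by
      rw [← hprod]
      exact (Nat.modEq_list_map_prod_iff hpair).mpr (fun i _ => key i)
    refine ⟨c, ?_⟩
    have hmul := Nat.ModEq.mul_left' 2 hm2
    have hsum_eq : (∑ i, 2 * d i * c i) = 2 * ∑ i, d i * c i := by
      rw [Finset.mul_sum]
      exact Finset.sum_congr rfl fun i _ => mul_assoc 2 (d i) (c i)
    rw [hsum_eq, hn]
    exact hmul
  -- even targets are sums of 2r generators
  have even_list : ∀ w : ℕ, ∃ l : List ℕ, (∀ k ∈ l, k ∈ S) ∧ l.length = 2 * r ∧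
      l.sum ≡ 2 * w [MOD n] := by
    intro w
    obtain ⟨c, hc⟩ := bezout w
    choose A B hA hB hAB using fun i => pair_exists i (c i)
    refine ⟨(List.finRange r).flatMap fun i => [A i, B i], ?_, ?_, ?_⟩
    · intro k hk
      obtain ⟨i, _, hk2⟩ := List.mem_flatMap.mp hk
      have hk3 : k = A i ∨ k = B i := by simpa using hk2
      rcases hk3 with h | h
      · rw [h]; exact hA i
      · rw [h]; exact hB i
    · rw [List.length_flatMap]
      simp [Function.comp_def]
      omega
    · rw [flatMap_pair_sum, ← Fin.sum_univ_def]
      exact (sum_modEq Finset.univ _ _ n (fun i _ => hAB i)).trans hc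
  -- upper bound: every residue is a sum of at most 2r+1 generators
  have upper : ∀ x : ZMod n, ∃ l : List ℕ, (∀ k ∈ l, k ∈ S) ∧ l.length ≤ 2 * r + 1 ∧
      x = ((l.sum : ℕ) : ZMod n) := by
    intro x
    have hxval : x = ((x.val : ℕ) : ZMod n) := (ZMod.natCast_rightInverse x).symm
    rcases Nat.even_or_odd x.val with hev | hod
    · obtain ⟨w, hw⟩ := hev
      obtain ⟨l, h1, h2, h3⟩ := even_list w
      refine ⟨l, h1, by omega, ?_⟩
      conv_lhs => rw [hxval]
      apply (ZMod.natCast_eq_natCast_iff _ _ _).mpr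
      rw [hw]
      have h4 : 2 * w = w + w := by ring
      rw [← h4]
      exact h3.symm
    · have hk₀ := hdi_mem_S ⟨0, hr⟩
      have hk₀odd : Odd (d ⟨0, hr⟩) := hd_odd ⟨0, hr⟩
      have hk₀lt : d ⟨0, hr⟩ < n := hd_lt ⟨0, hr⟩
      have hpar : ∃ w, x.val + n - d ⟨0, hr⟩ = 2 * w := by
        have h1 : x.val % 2 = 1 := Nat.odd_iff.mp hod
        have h2 : d ⟨0, hr⟩ % 2 = 1 := Nat.odd_iff.mp hk₀odd
        have h3 : n % 2 = 0 := by omega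
        exact ⟨(x.val + n - d ⟨0, hr⟩) / 2, by omega⟩
      obtain ⟨w, hw⟩ := hpar
      obtain ⟨l, h1l, h2l, h3l⟩ := even_list w
      refine ⟨d ⟨0, hr⟩ :: l, ?_, by simp [h2l], ?_⟩
      · intro k hk
        rcases List.mem_cons.mp hk with h | h
        · rw [h]; exact hk₀
        · exact h1l k h
      · have hmod : (d ⟨0, hr⟩ + l.sum) ≡ x.val [MOD n] := by
          calc d ⟨0, hr⟩ + l.sum ≡ d ⟨0, hr⟩ + 2 * w [MOD n] := Nat.ModEq.add_left _ h3l
          _ = x.val + n := by omega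
          _ ≡ x.val + 0 [MOD n] := Nat.ModEq.add_left _ (Nat.modEq_zero_iff_dvd.mpr (dvd_refl n))
          _ = x.val := by omega
        conv_lhs => rw [hxval]
        rw [List.sum_cons]
        exact ((ZMod.natCast_eq_natCast_iff _ _ _).mpr hmod).symm
  have upper_dist : ∀ u v : ZMod n, G.edist u v ≤ ((2 * r + 1 : ℕ) : ℕ∞) := by
    intro u v
    obtain ⟨l, hmem, hlen, hsum⟩ := upper (v - u)
    obtain ⟨W, hW⟩ := list_walk l hmem u
    have hend : u + ((l.sum : ℕ) : ZMod n) = v := by rw [← hsum]; ring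
    have hle := SimpleGraph.edist_le (W.copy rfl hend)
    rw [SimpleGraph.Walk.length_copy, hW] at hle
    exact hle.trans (by exact_mod_cast Nat.cast_le.mpr hlen)
  -- lower bound at the vertex m
  have lower : ∀ (W : G.Walk (0 : ZMod n) ((m : ℕ) : ZMod n)), 2 * r + 1 ≤ W.length := by
    intro W
    obtain ⟨l, hmem, hlen, hsum⟩ := walk_list _ _ W
    suffices h : 2 * r + 1 ≤ l.length by omega
    have hmod : (m : ℕ) ≡ l.sum [MOD n] := by
      apply (ZMod.natCast_eq_natCast_iff _ _ _).mp
      exact hsum.trans (zero_add _)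
    have hcount : ∀ i : Fin r, 2 ≤ (l.filter fun k => Nat.gcd k n = d i).length := by
      intro i
      have hpi2_n : p i ^ 2 ∣ n := ⟨2 * d i, by rw [hn_i i]; ring⟩
      have hrest : m ≡ (l.filter fun k => Nat.gcd k n = d i).sum [MOD p i ^ 2] := by
        refine (hmod.of_dvd hpi2_n).trans ?_
        refine filter_sum_modEq _ _ l ?_
        intro k hk hnk
        obtain ⟨_, _, j, hj⟩ := (hSmem k).mp (hmem k hk)
        have hji : j ≠ i := fun h => hnk (by rw [hj, h])
        exact dvd_trans (hpj2_dvd j i (Ne.symm hji)) (hj ▸ Nat.gcd_dvd_left k n)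
      rcases hlf : l.filter (fun k => Nat.gcd k n = d i) with _ | ⟨k, _ | ⟨k', t⟩⟩
      · exfalso
        rw [hlf] at hrest
        simp only [List.sum_nil] at hrest
        have hdvd : p i ^ 2 ∣ m := Nat.modEq_zero_iff_dvd.mp hrest
        have hcontra : p i ∣ m / p i := by
          have h1 : p i * p i ∣ p i * (m / p i) := by
            rw [hqp i, ← pow_two]; exact hdvd
          exact (mul_dvd_mul_iff_left (hprime i).pos.ne').mp h1
        exact hpq i hcontra
      · exfalso
        rw [hlf] at hrest
        simp only [List.sum_cons, List.sum_nil, add_zero] at hrest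
        have h1 : m ≡ k [MOD p i] := hrest.of_dvd (dvd_pow_self (p i) (by norm_num))
        have hpm : p i ∣ m := ⟨m / p i, (hqp i).symm⟩
        have hpk : p i ∣ k := by
          have h2 : m % p i = k % p i := h1
          have h3 : m % p i = 0 := Nat.mod_eq_zero_of_dvd hpm
          exact Nat.dvd_of_mod_eq_zero (by omega)
        have hkmem : k ∈ l ∧ Nat.gcd k n = d i := by
          have hk1 : k ∈ l.filter (fun k => Nat.gcd k n = d i) := by
            rw [hlf]; exact List.mem_singleton_self k
          have := List.mem_filter.mp hk1
          simpa using this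
        exact hS_not_dvd k (hmem k hkmem.1) i hkmem.2 hpk
      · simp only [List.length_cons]; omega
    have hsum_le := sum_filter_length_le (fun (i : Fin r) (k : ℕ) => Nat.gcd k n = d i)
        (fun k i j hi hj => hd_inj i j (hi.symm.trans hj)) l
    have htot : 2 * r ≤ ∑ i : Fin r, (l.filter fun k => Nat.gcd k n = d i).length := by
      calc 2 * r = ∑ _i : Fin r, 2 := by simp [Finset.sum_const, Finset.card_univ, mul_comm]
      _ ≤ _ := Finset.sum_le_sum (fun i _ => hcount i)
    have hpar : l.sum % 2 = l.length % 2 := list_sum_parity l (fun k hk => hS_odd k (hmem k hk))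
    have hm2' : m % 2 = l.sum % 2 := hmod.of_dvd ⟨m ^ 2, hn⟩
    have hmo : m % 2 = 1 := Nat.odd_iff.mp hmodd
    omega
  -- the exact eccentric pair
  have hedist : G.edist (0 : ZMod n) ((m : ℕ) : ZMod n) = ((2 * r + 1 : ℕ) : ℕ∞) := by
    apply le_antisymm (upper_dist 0 ((m : ℕ) : ZMod n))
    by_contra hlt
    push_neg at hlt
    have hne : G.edist (0 : ZMod n) ((m : ℕ) : ZMod n) ≠ ⊤ := hlt.ne_top
    obtain ⟨W, hW⟩ := (SimpleGraph.reachable_of_edist_ne_top hne).exists_walk_length_eq_edist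
    rw [← hW] at hlt
    have hWlt : W.length < 2 * r + 1 := by exact_mod_cast hlt
    exact absurd (lower W) (by omega)
  have hediam : G.ediam = ((2 * r + 1 : ℕ) : ℕ∞) :=
    le_antisymm (SimpleGraph.ediam_le_of_edist_le fun u v => upper_dist u v)
      (hedist ▸ SimpleGraph.edist_le_ediam)
  have hdiam : G.diam = G.ediam.toNat := rfl
  rw [hdiam, hediam]
  exact ENat.toNat_coe _
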